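/- The jointly-measurable incompatibility robustness equals the maximal consistent-LHS steering robustness within the SEO class: for every measurement assemblage {B_{a|x}} and every full-rank density matrix ρ, SR^{C-LHS}(ρ^{1/2} B ρ^{1/2}) = IR^{JM}(B). Hence max over density matrices ρ of SR^{C-LHS}(ρ^{1/2} B ρ^{1/2}) equals IR^{JM}(B). -/

import Mathlib

open Matrix Kronecker BigOperators ComplexOrder

noncomputable section

/-- A density matrix: positive semidefinite with unit trace. -/
def IsDensity {d : ℕ} (ρ : Matrix (Fin d) (Fin d) ℂ) : Prop :=
  ρ.PosSemidef ∧ ρ.trace = 1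

/-- A POVM: positive semidefinite effects summing to the identity. -/
def IsPOVM {d nl : ℕ} (G : Fin nl → Matrix (Fin d) (Fin d) ℂ) : Prop :=
  (∀ l, (G l).PosSemidef) ∧ ∑ l, G l = 1

/-- A measurement assemblage: for each setting `x`, a POVM `a ↦ M x a`. -/
def IsMA {d na nx : ℕ} (M : Fin nx → Fin na → Matrix (Fin d) (Fin d) ℂ) : Prop :=
  (∀ x a, (M x a).PosSemidef) ∧ ∀ x, ∑ a, M x a = 1

/-- Joint measurability: `M x a = ∑ λ p(a|x,λ) G λ` for a parent POVM `G`. -/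
def JM {d na nx : ℕ} (M : Fin nx → Fin na → Matrix (Fin d) (Fin d) ℂ) : Prop :=
  ∃ (nl : ℕ) (G : Fin nl → Matrix (Fin d) (Fin d) ℂ)
    (p : Fin nx → Fin na → Fin nl → ℝ),
    IsPOVM G ∧ (∀ x a l, 0 ≤ p x a l) ∧ (∀ x l, ∑ a, p x a l = 1) ∧
    ∀ x a, M x a = ∑ l, (p x a l : ℂ) • G l

/-- A state assemblage: PSD elements with an `x`-independent reduced density matrix. -/
def IsSA {d na nx : ℕ} (σ : Fin nx → Fin na → Matrix (Fin d) (Fin d) ℂ) : Prop :=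
  (∀ x a, (σ x a).PosSemidef) ∧
  ∃ ρ : Matrix (Fin d) (Fin d) ℂ, IsDensity ρ ∧ ∀ x, ∑ a, σ x a = ρ

/-- Local-hidden-state model: `σ x a = ∑ λ q(λ) p(a|x,λ) ρ_λ`. -/
def LHS {d na nx : ℕ} (σ : Fin nx → Fin na → Matrix (Fin d) (Fin d) ℂ) : Prop :=
  ∃ (nl : ℕ) (q : Fin nl → ℝ) (p : Fin nx → Fin na → Fin nl → ℝ)
    (ρ : Fin nl → Matrix (Fin d) (Fin d) ℂ),
    (∀ l, 0 ≤ q l) ∧ (∑ l, q l = 1) ∧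
    (∀ x a l, 0 ≤ p x a l) ∧ (∀ x l, ∑ a, p x a l = 1) ∧
    (∀ l, IsDensity (ρ l)) ∧
    ∀ x a, σ x a = ∑ l, ((q l * p x a l : ℝ) : ℂ) • ρ l

/-- Incompatibility robustness. -/
def IR {d na nx : ℕ} (B : Fin nx → Fin na → Matrix (Fin d) (Fin d) ℂ) : ℝ :=
  sInf {t : ℝ | 0 ≤ t ∧ ∃ N, IsMA N ∧
    JM (fun x a => (((1 + t : ℝ))⁻¹ : ℂ) • (B x a + (t : ℂ) • N x a))}

/-- Steering robustness. -/
def SR {d na nx : ℕ} (σ : Fin nx → Fin na → Matrix (Fin d) (Fin d) ℂ) : ℝ :=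
  sInf {t : ℝ | 0 ≤ t ∧ ∃ ξ, IsSA ξ ∧
    LHS (fun x a => (((1 + t : ℝ))⁻¹ : ℂ) • (σ x a + (t : ℂ) • ξ x a))}

/-- Incompatible weight. -/
def IW {d na nx : ℕ} (B : Fin nx → Fin na → Matrix (Fin d) (Fin d) ℂ) : ℝ :=
  sInf {t : ℝ | 0 ≤ t ∧ t ≤ 1 ∧ ∃ N O, IsMA N ∧ JM O ∧
    ∀ x a, B x a = (t : ℂ) • N x a + ((1 - t : ℝ) : ℂ) • O x a}

/-- Steerable weight. -/
def SW {d na nx : ℕ} (σ : Fin nx → Fin na → Matrix (Fin d) (Fin d) ℂ) : ℝ :=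
  sInf {t : ℝ | 0 ≤ t ∧ t ≤ 1 ∧ ∃ ξ τ, IsSA ξ ∧ LHS τ ∧
    ∀ x a, σ x a = (t : ℂ) • ξ x a + ((1 - t : ℝ) : ℂ) • τ x a}

/-- Positive map on matrices. -/
def PosMap {d : ℕ} (E : Matrix (Fin d) (Fin d) ℂ →ₗ[ℂ] Matrix (Fin d) (Fin d) ℂ) : Prop :=
  ∀ X, X.PosSemidef → (E X).PosSemidef

/-- Trace-nonincreasing on PSD matrices. -/
def TNI {d : ℕ} (E : Matrix (Fin d) (Fin d) ℂ →ₗ[ℂ] Matrix (Fin d) (Fin d) ℂ) : Prop :=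
  ∀ X : Matrix (Fin d) (Fin d) ℂ, X.PosSemidef → (E X).trace.re ≤ X.trace.re

/-- `Ed` is the Hilbert–Schmidt adjoint of `E`. -/
def IsAdjoint {d : ℕ} (E Ed : Matrix (Fin d) (Fin d) ℂ →ₗ[ℂ] Matrix (Fin d) (Fin d) ℂ) : Prop :=
  ∀ X Y, ((E X)ᴴ * Y).trace = (Xᴴ * (Ed Y)).trace

/-- Partial trace over the first tensor factor. -/
def ptraceA {d d' : ℕ} (M : Matrix (Fin d × Fin d') (Fin d × Fin d') ℂ) :
    Matrix (Fin d') (Fin d') ℂ :=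
  Matrix.of fun i j => ∑ k : Fin d, M (k, i) (k, j)

/-- The map `E ⊗ id` acting on bipartite matrices. -/
def tensId {d d' : ℕ} (E : Matrix (Fin d) (Fin d) ℂ →ₗ[ℂ] Matrix (Fin d) (Fin d) ℂ)
    (M : Matrix (Fin d × Fin d') (Fin d × Fin d') ℂ) :
    Matrix (Fin d × Fin d') (Fin d × Fin d') ℂ :=
  Matrix.of fun p q => E (Matrix.of fun i k => M (i, p.2) (k, q.2)) p.1 q.1

/-- The square root of a positive semidefinite matrix (removed from Mathlib; old definition). -/
def Matrix.PosSemidef.sqrt {n : Type*} [Fintype n] [DecidableEq n] {A : Matrix n n ℂ}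
    (hA : A.PosSemidef) : Matrix n n ℂ :=
  hA.1.eigenvectorUnitary.1 * diagonal ((↑) ∘ (√·) ∘ hA.1.eigenvalues) *
    (star hA.1.eigenvectorUnitary : Matrix n n ℂ)

/-- JM incompatibility robustness: the noise assemblage is itself jointly measurable. -/
def IRJM {d na nx : ℕ} (B : Fin nx → Fin na → Matrix (Fin d) (Fin d) ℂ) : ℝ :=
  sInf {t : ℝ | 0 ≤ t ∧ ∃ N, IsMA N ∧ JM N ∧
    JM (fun x a => (((1 + t : ℝ))⁻¹ : ℂ) • (B x a + (t : ℂ) • N x a))}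

/-- Consistent LHS steering robustness: the noise assemblage is LHS with the same
reduced state as `σ`. -/
def SRCLHS {d na nx : ℕ} (σ : Fin nx → Fin na → Matrix (Fin d) (Fin d) ℂ) : ℝ :=
  sInf {t : ℝ | 0 ≤ t ∧ ∃ ξ, IsSA ξ ∧ LHS ξ ∧ (∀ x, ∑ a, ξ x a = ∑ a, σ x a) ∧
    LHS (fun x a => (((1 + t : ℝ))⁻¹ : ℂ) • (σ x a + (t : ℂ) • ξ x a))}


section Helpers

theorem Matrix.PosSemidef.posSemidef_sqrt {n : Type*} [Fintype n] [DecidableEq n]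
    {A : Matrix n n ℂ} (hA : A.PosSemidef) : hA.sqrt.PosSemidef := by
  unfold Matrix.PosSemidef.sqrt
  have hD : (diagonal ((↑) ∘ (√·) ∘ hA.1.eigenvalues) : Matrix n n ℂ).PosSemidef := by
    rw [Matrix.posSemidef_diagonal_iff]
    intro i
    simp [Complex.zero_le_real, Real.sqrt_nonneg]
  have := hD.mul_mul_conjTranspose_same (hA.1.eigenvectorUnitary : Matrix n n ℂ)
  rw [Matrix.star_eq_conjTranspose]
  exact this

theorem Matrix.PosSemidef.sqrt_mul_self {n : Type*} [Fintype n] [DecidableEq n]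
    {A : Matrix n n ℂ} (hA : A.PosSemidef) : hA.sqrt * hA.sqrt = A := by
  unfold Matrix.PosSemidef.sqrt
  have hU : star (hA.1.eigenvectorUnitary : Matrix n n ℂ) *
      (hA.1.eigenvectorUnitary : Matrix n n ℂ) = 1 :=
    Unitary.star_mul_self_of_mem hA.1.eigenvectorUnitary.2
  conv_rhs => rw [hA.1.spectral_theorem, Unitary.conjStarAlgAut_apply]
  calc _ = (hA.1.eigenvectorUnitary : Matrix n n ℂ) *
        (diagonal ((↑) ∘ (√·) ∘ hA.1.eigenvalues) *
          (star (hA.1.eigenvectorUnitary : Matrix n n ℂ) *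
            (hA.1.eigenvectorUnitary : Matrix n n ℂ)) *
          diagonal ((↑) ∘ (√·) ∘ hA.1.eigenvalues)) *
        star (hA.1.eigenvectorUnitary : Matrix n n ℂ) := by
        simp only [Unitary.coe_star, Matrix.mul_assoc]
    _ = _ := by
        rw [hU, Matrix.mul_one, diagonal_mul_diagonal]
        simp only [Unitary.coe_star, Matrix.mul_assoc]
        congr 1
        congr 1
        congr 1
        funext i
        simp only [Function.comp_apply]
        rw [← Complex.ofReal_mul, Real.mul_self_sqrt (hA.eigenvalues_nonneg i)]
        rfl

variable {d na nx : ℕ}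

lemma diag_nn {A : Matrix (Fin d) (Fin d) ℂ} (hA : A.PosSemidef) (i : Fin d) :
    0 ≤ A i i := by
  exact hA.diag_nonneg

lemma trace_nn {A : Matrix (Fin d) (Fin d) ℂ} (hA : A.PosSemidef) :
    0 ≤ A.trace :=
  Finset.sum_nonneg fun i _ => diag_nn hA i

lemma trace_real {A : Matrix (Fin d) (Fin d) ℂ} (hA : A.PosSemidef) :
    A.trace = ((A.trace.re : ℝ) : ℂ) := by
  have h := trace_nn hA
  rw [Complex.le_def] at h
  exact Complex.ext rfl (by simpa using h.2.symm)

lemma trace_re_nn {A : Matrix (Fin d) (Fin d) ℂ} (hA : A.PosSemidef) :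
    0 ≤ A.trace.re := by
  have h := trace_nn hA
  rw [Complex.le_def] at h
  simpa using h.1

lemma psd_of_trace_zero {A : Matrix (Fin d) (Fin d) ℂ} (hA : A.PosSemidef)
    (h : A.trace = 0) : A = 0 := by
  exact hA.trace_eq_zero_iff.mp h

lemma psd_smul {A : Matrix (Fin d) (Fin d) ℂ} (hA : A.PosSemidef) {c : ℝ}
    (hc : 0 ≤ c) : ((c : ℂ) • A).PosSemidef := by
  rw [Matrix.posSemidef_iff_dotProduct_mulVec]
  constructor
  · unfold Matrix.IsHermitian
    rw [Matrix.conjTranspose_smul, hA.1.eq]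
    congr 1
    simp [Complex.ext_iff]
  · intro x
    rw [Matrix.smul_mulVec, dotProduct_smul]
    exact mul_nonneg (by simpa using Complex.zero_le_real.mpr hc)
      ((Matrix.posSemidef_iff_dotProduct_mulVec.mp hA).2 x)

lemma conj_psd {S A : Matrix (Fin d) (Fin d) ℂ} (hS : Sᴴ = S) (hA : A.PosSemidef) :
    (S * A * S).PosSemidef := by
  have := hA.mul_mul_conjTranspose_same S
  rwa [hS] at this

lemma mul_sum_mul {S : Matrix (Fin d) (Fin d) ℂ} {ι : Type*} [Fintype ι]
    (f : ι → Matrix (Fin d) (Fin d) ℂ) :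
    S * (∑ i, f i) * S = ∑ i, S * f i * S := by
  rw [Finset.mul_sum, Finset.sum_mul]

lemma mul_sum_smul_mul {S : Matrix (Fin d) (Fin d) ℂ} {ι : Type*} [Fintype ι]
    (c : ι → ℂ) (f : ι → Matrix (Fin d) (Fin d) ℂ) :
    S * (∑ i, c i • f i) * S = ∑ i, c i • (S * f i * S) := by
  rw [Finset.mul_sum, Finset.sum_mul]
  exact Finset.sum_congr rfl fun i _ => by rw [mul_smul_comm, smul_mul_assoc]

lemma jm_nx_zero (M : Fin 0 → Fin na → Matrix (Fin d) (Fin d) ℂ) : JM M :=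
  ⟨1, fun _ => 1, fun _ _ _ => 0,
    ⟨fun _ => Matrix.PosSemidef.one, by simp⟩,
    fun x => x.elim0, fun x => x.elim0, fun x => x.elim0⟩

lemma lhs_nx_zero {ρ₀ : Matrix (Fin d) (Fin d) ℂ} (h : IsDensity ρ₀)
    (M : Fin 0 → Fin na → Matrix (Fin d) (Fin d) ℂ) : LHS M :=
  ⟨1, fun _ => 1, fun _ _ _ => 0, fun _ => ρ₀,
    fun _ => zero_le_one, by simp, fun x => x.elim0, fun x => x.elim0, fun _ => h,
    fun x => x.elim0⟩

lemma lhs_of_jm_conj {S : Matrix (Fin d) (Fin d) ℂ} (hS : S.PosSemidef)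
    (hS2 : (S * S).trace = 1) {M : Fin nx → Fin na → Matrix (Fin d) (Fin d) ℂ}
    (hM : JM M) : LHS (fun x a => S * M x a * S) := by
  obtain ⟨nl, G, p, ⟨hGpsd, hGsum⟩, hp0, hp1, hMeq⟩ := hM
  have hSS : (S * S).PosSemidef := by simpa [pow_two] using hS.pow 2
  have hconj : ∀ l, (S * G l * S).PosSemidef := fun l => conj_psd hS.1.eq (hGpsd l)
  set q : Fin nl → ℝ := fun l => ((S * G l * S).trace).re with hqdef
  have hq0 : ∀ l, 0 ≤ q l := fun l => trace_re_nn (hconj l)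
  have htr : ∀ l, (S * G l * S).trace = ((q l : ℝ) : ℂ) := fun l => trace_real (hconj l)
  have hqsum : ∑ l, q l = 1 := by
    have h2 : ∑ l, (S * G l * S).trace = 1 := by
      rw [← Matrix.trace_sum, ← mul_sum_mul, hGsum, Matrix.mul_one, hS2]
    have := congrArg Complex.re h2
    simpa [Complex.re_sum] using this
  set ρf : Fin nl → Matrix (Fin d) (Fin d) ℂ :=
    fun l => if q l = 0 then S * S else (((q l)⁻¹ : ℝ) : ℂ) • (S * G l * S) with hρfdef
  have key : ∀ l, ((q l : ℝ) : ℂ) • ρf l = S * G l * S := by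
    intro l
    by_cases h : q l = 0
    · have hz : S * G l * S = 0 := by
        apply psd_of_trace_zero (hconj l)
        rw [htr l, h]
        simp
      rw [hρfdef]
      simp only [h, if_pos]
      simp [hz]
    · rw [hρfdef]
      simp only [if_neg h, smul_smul, ← Complex.ofReal_mul, mul_inv_cancel₀ h]
      simp
  have hρf : ∀ l, IsDensity (ρf l) := by
    intro l
    by_cases h : q l = 0
    · rw [hρfdef]; simp only [if_pos h]
      exact ⟨hSS, hS2⟩
    · rw [hρfdef]; simp only [if_neg h]
      refine ⟨psd_smul (hconj l) (inv_nonneg.mpr (hq0 l)), ?_⟩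
      rw [Matrix.trace_smul, htr l, smul_eq_mul, ← Complex.ofReal_mul,
        inv_mul_cancel₀ h]
      simp
  refine ⟨nl, q, p, ρf, hq0, hqsum, hp0, hp1, hρf, fun x a => ?_⟩
  show S * M x a * S = _
  rw [hMeq x a, mul_sum_smul_mul]
  refine Finset.sum_congr rfl fun l _ => ?_
  rw [← key l, smul_smul, ← Complex.ofReal_mul, mul_comm (p x a l)]

lemma jm_of_lhs_conj {T : Matrix (Fin d) (Fin d) ℂ} (hT : Tᴴ = T)
    {A : Fin nx → Fin na → Matrix (Fin d) (Fin d) ℂ} (hA : LHS A)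
    (x₀ : Fin nx) (h1 : T * (∑ a, A x₀ a) * T = 1) :
    JM (fun x a => T * A x a * T) := by
  obtain ⟨nl, q, p, ρv, hq0, hqsum, hp0, hp1, hρv, hAeq⟩ := hA
  have hsum : (∑ l, ((q l : ℝ) : ℂ) • ρv l) = ∑ a, A x₀ a := by
    rw [Finset.sum_congr rfl (fun a _ => hAeq x₀ a), Finset.sum_comm]
    refine Finset.sum_congr rfl fun l _ => ?_
    rw [← Finset.sum_smul]
    congr 1
    rw [← Complex.ofReal_sum, ← Finset.mul_sum, hp1, mul_one]
  refine ⟨nl, fun l => ((q l : ℝ) : ℂ) • (T * ρv l * T), p, ⟨?_, ?_⟩, hp0, hp1, ?_⟩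
  · exact fun l => psd_smul (conj_psd hT (hρv l).1) (hq0 l)
  · calc ∑ l, ((q l : ℝ) : ℂ) • (T * ρv l * T)
        = T * (∑ l, ((q l : ℝ) : ℂ) • ρv l) * T := (mul_sum_smul_mul _ _).symm
      _ = 1 := by rw [hsum, h1]
  · intro x a
    show T * A x a * T = _
    rw [hAeq x a, mul_sum_smul_mul]
    refine Finset.sum_congr rfl fun l _ => ?_
    rw [smul_smul, ← Complex.ofReal_mul, mul_comm (p x a l)]

lemma irjm_set_nonempty (B : Fin nx → Fin na → Matrix (Fin d) (Fin d) ℂ)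
    (hB : IsMA B) (hd : d ≠ 0) :
    {t : ℝ | 0 ≤ t ∧ ∃ N, IsMA N ∧ JM N ∧
      JM (fun x a => (((1 + t : ℝ))⁻¹ : ℂ) • (B x a + (t : ℂ) • N x a))}.Nonempty := by
  rcases Nat.eq_zero_or_pos nx with hnx | hnx
  · subst hnx
    exact ⟨0, le_refl 0, fun x => x.elim0, ⟨fun x => x.elim0, fun x => x.elim0⟩,
      jm_nx_zero _, jm_nx_zero _⟩
  · have hna : na ≠ 0 := by
      rintro rfl
      have h0 : (0 : Matrix (Fin d) (Fin d) ℂ) = 1 := by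
        simpa using hB.2 ⟨0, hnx⟩
      have hi : Fin d := ⟨0, Nat.pos_of_ne_zero hd⟩
      have := congrFun (congrFun h0 hi) hi
      simp [Matrix.one_apply] at this
    have hnaC : ((na : ℕ) : ℂ) ≠ 0 := Nat.cast_ne_zero.mpr hna
    have hnxC : ((nx : ℕ) : ℂ) ≠ 0 := Nat.cast_ne_zero.mpr hnx.ne'
    have hnaR : ((na : ℕ) : ℝ) ≠ 0 := Nat.cast_ne_zero.mpr hna
    have hnxR : ((nx : ℕ) : ℝ) ≠ 0 := Nat.cast_ne_zero.mpr hnx.ne'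
    set t : ℝ := (nx : ℝ) - 1 with htdef
    have ht : 0 ≤ t := by
      have : (1 : ℝ) ≤ (nx : ℝ) := by exact_mod_cast hnx
      simp [htdef]; linarith
    have h1t : 1 + t = (nx : ℝ) := by rw [htdef]; ring
    set N : Fin nx → Fin na → Matrix (Fin d) (Fin d) ℂ :=
      fun _ _ => (((na : ℝ)⁻¹ : ℝ) : ℂ) • 1 with hNdef
    have hNsum : ∀ x : Fin nx, ∑ _a : Fin na,
        (((na : ℝ)⁻¹ : ℝ) : ℂ) • (1 : Matrix (Fin d) (Fin d) ℂ) = 1 := by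
      intro x
      rw [Finset.sum_const, Finset.card_univ, Fintype.card_fin,
        ← Nat.cast_smul_eq_nsmul ℂ, smul_smul]
      have hc : ((na : ℕ) : ℂ) * ((((na : ℝ)⁻¹ : ℝ)) : ℂ) = 1 := by
        push_cast
        exact mul_inv_cancel₀ hnaC
      rw [hc, one_smul]
    have hNMA : IsMA N := by
      refine ⟨fun x a => psd_smul Matrix.PosSemidef.one (by positivity), fun x => hNsum x⟩
    have hNJM : JM N := by
      refine ⟨1, fun _ => 1, fun _ _ _ => (na : ℝ)⁻¹,
        ⟨fun _ => Matrix.PosSemidef.one, by simp⟩,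
        fun _ _ _ => by positivity, fun x l => ?_, fun x a => ?_⟩
      · rw [Finset.sum_const, Finset.card_univ, Fintype.card_fin, nsmul_eq_mul]
        exact mul_inv_cancel₀ hnaR
      · simp [hNdef]
    set e : Fin nx × Fin na ≃ Fin (nx * na) := finProdFinEquiv with hedef
    set G : Fin (nx * na) → Matrix (Fin d) (Fin d) ℂ :=
      fun l => (((nx : ℝ)⁻¹ : ℝ) : ℂ) • B (e.symm l).1 (e.symm l).2 with hGdef
    set p : Fin nx → Fin na → Fin (nx * na) → ℝ :=
      fun x a l => if (e.symm l).1 = x then (if (e.symm l).2 = a then 1 else 0)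
        else (na : ℝ)⁻¹ with hpdef
    have hGsum : ∑ l, G l = 1 := by
      rw [← Equiv.sum_comp e G]
      have hrow : ∀ x' : Fin nx, ∑ a' : Fin na, G (e (x', a'))
          = (((nx : ℝ)⁻¹ : ℝ) : ℂ) • (1 : Matrix (Fin d) (Fin d) ℂ) := by
        intro x'
        simp only [hGdef, Equiv.symm_apply_apply]
        rw [← Finset.smul_sum, hB.2 x']
      rw [Fintype.sum_prod_type, Finset.sum_congr rfl fun x' _ => hrow x',
        Finset.sum_const, Finset.card_univ, Fintype.card_fin,
        ← Nat.cast_smul_eq_nsmul ℂ, smul_smul]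
      have hc : ((nx : ℕ) : ℂ) * ((((nx : ℝ)⁻¹ : ℝ)) : ℂ) = 1 := by
        push_cast
        exact mul_inv_cancel₀ hnxC
      rw [hc, one_smul]
    have hp0 : ∀ x a l, 0 ≤ p x a l := by
      intro x a l
      simp only [hpdef]
      split_ifs <;> positivity
    have hp1 : ∀ x l, ∑ a, p x a l = 1 := by
      intro x l
      by_cases h : (e.symm l).1 = x
      · simp only [hpdef, if_pos h]
        rw [Finset.sum_ite_eq]
        simp
      · simp only [hpdef, if_neg h]
        rw [Finset.sum_const, Finset.card_univ, Fintype.card_fin, nsmul_eq_mul]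
        exact mul_inv_cancel₀ hnaR
    refine ⟨t, ht, N, hNMA, hNJM, nx * na, G, p, ⟨fun l => psd_smul (hB.1 _ _) (by positivity), hGsum⟩,
      hp0, hp1, fun x a => ?_⟩
    have hR : ∑ l, ((p x a l : ℝ) : ℂ) • G l
        = (((nx : ℝ)⁻¹ : ℝ) : ℂ) • B x a
          + ((((nx : ℝ) - 1) * (nx : ℝ)⁻¹ * (na : ℝ)⁻¹ : ℝ) : ℂ) • 1 := by
      rw [← Equiv.sum_comp e (fun l => ((p x a l : ℝ) : ℂ) • G l), Fintype.sum_prod_type]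
      have hin : ∀ x' : Fin nx,
          ∑ a' : Fin na, ((p x a (e (x', a')) : ℝ) : ℂ) • G (e (x', a'))
          = if x' = x then (((nx : ℝ)⁻¹ : ℝ) : ℂ) • B x a
            else (((nx : ℝ)⁻¹ * (na : ℝ)⁻¹ : ℝ) : ℂ) • 1 := by
        intro x'
        by_cases h : x' = x
        · rw [if_pos h, ← h]
          calc ∑ a' : Fin na, ((p x' a (e (x', a')) : ℝ) : ℂ) • G (e (x', a'))
              = ∑ a' : Fin na, (if a' = a then (((nx : ℝ)⁻¹ : ℝ) : ℂ) • B x' a' else 0) := by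
                refine Finset.sum_congr rfl fun a' _ => ?_
                simp only [hpdef, hGdef, Equiv.symm_apply_apply, if_pos rfl]
                by_cases h2 : a' = a
                · simp [h2]
                · simp [h2]
            _ = (((nx : ℝ)⁻¹ : ℝ) : ℂ) • B x' a := by
                rw [Finset.sum_ite_eq']
                simp
        · rw [if_neg h]
          simp only [hpdef, hGdef, Equiv.symm_apply_apply, if_neg h]
          rw [Finset.sum_congr rfl (fun a' _ => smul_smul _ _ _), ← Finset.smul_sum, hB.2 x']
          rw [← Complex.ofReal_mul]
          ring_nf
      rw [Finset.sum_congr rfl fun x' _ => hin x']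
      set P : Matrix (Fin d) (Fin d) ℂ := (((nx : ℝ)⁻¹ : ℝ) : ℂ) • B x a with hP
      set Q : Matrix (Fin d) (Fin d) ℂ := (((nx : ℝ)⁻¹ * (na : ℝ)⁻¹ : ℝ) : ℂ) • 1 with hQ
      have hsplit : ∀ x' : Fin nx, (if x' = x then P else Q)
          = Q + (if x' = x then P - Q else 0) := by
        intro x'
        split_ifs <;> simp
      rw [Finset.sum_congr rfl fun x' _ => hsplit x', Finset.sum_add_distrib,
        Finset.sum_ite_eq', Finset.sum_const, Finset.card_univ, Fintype.card_fin]
      simp only [Finset.mem_univ, if_true]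
      rw [← Nat.cast_smul_eq_nsmul ℂ, hP, hQ, smul_smul]
      have hsc : ((nx : ℕ) : ℂ) * (((nx : ℝ)⁻¹ * (na : ℝ)⁻¹ : ℝ) : ℂ)
          - (((nx : ℝ)⁻¹ * (na : ℝ)⁻¹ : ℝ) : ℂ)
          = ((((nx : ℝ) - 1) * (nx : ℝ)⁻¹ * (na : ℝ)⁻¹ : ℝ) : ℂ) := by
        push_cast
        ring
      rw [← hsc, sub_smul]
      abel
    show (((1 + t : ℝ))⁻¹ : ℂ) • (B x a + (t : ℂ) • N x a) = _
    rw [hR]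
    simp only [hNdef]
    rw [smul_add, smul_smul, smul_smul]
    congr 1
    · congr 1
      rw [h1t]
      norm_cast
    · congr 1
      rw [h1t, htdef]
      push_cast
      ring

lemma jm_of_isEmpty (h : IsEmpty (Fin nx)) (M : Fin nx → Fin na → Matrix (Fin d) (Fin d) ℂ) :
    JM M :=
  ⟨1, fun _ => 1, fun _ _ _ => 0,
    ⟨fun _ => Matrix.PosSemidef.one, by simp⟩,
    fun x => (h.false x).elim, fun x => (h.false x).elim, fun x => (h.false x).elim⟩

lemma forward_subset {W : Matrix (Fin d) (Fin d) ℂ} (hW : W.PosSemidef)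
    (hW1 : (W * W).trace = 1) (B : Fin nx → Fin na → Matrix (Fin d) (Fin d) ℂ)
    (hB : IsMA B) :
    {t : ℝ | 0 ≤ t ∧ ∃ N, IsMA N ∧ JM N ∧
      JM (fun x a => (((1 + t : ℝ))⁻¹ : ℂ) • (B x a + (t : ℂ) • N x a))} ⊆
    {t : ℝ | 0 ≤ t ∧ ∃ ξ, IsSA ξ ∧ LHS ξ ∧
      (∀ x, ∑ a, ξ x a = ∑ a, W * B x a * W) ∧
      LHS (fun x a => (((1 + t : ℝ))⁻¹ : ℂ) •
        (W * B x a * W + (t : ℂ) • ξ x a))} := by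
  rintro t ⟨ht, N, hNMA, hNJM, hmix⟩
  have hWW : (W * W).PosSemidef := by simpa [pow_two] using hW.pow 2
  refine ⟨ht, fun x a => W * N x a * W,
    ⟨fun x a => conj_psd hW.1.eq (hNMA.1 x a), W * W, ⟨hWW, hW1⟩,
      fun x => by rw [← mul_sum_mul, hNMA.2 x, Matrix.mul_one]⟩,
    lhs_of_jm_conj hW hW1 hNJM,
    fun x => by rw [← mul_sum_mul, ← mul_sum_mul, hNMA.2 x, hB.2 x], ?_⟩
  have hfe : (fun x a => (((1 + t : ℝ))⁻¹ : ℂ) •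
        (W * B x a * W + (t : ℂ) • (W * N x a * W)))
      = (fun x a => W * ((((1 + t : ℝ))⁻¹ : ℂ) • (B x a + (t : ℂ) • N x a)) * W) := by
    funext x a
    rw [mul_smul_comm, smul_mul_assoc, mul_add, add_mul, mul_smul_comm, smul_mul_assoc]
  rw [hfe]
  exact lhs_of_jm_conj hW hW1 hmix

end Helpers

/-- SR^{C-LHS}(ρ^{1/2} B ρ^{1/2}) = IR^{JM}(B) for every full-rank
density matrix ρ; hence the maximum over densities equals IR^{JM}(B). -/
theorem srclhs_eq_irjm {d na nx : ℕ}
    (B : Fin nx → Fin na → Matrix (Fin d) (Fin d) ℂ) (hB : IsMA B)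
    (ρ : Matrix (Fin d) (Fin d) ℂ) (hρ : ρ.PosDef) (hρ1 : ρ.trace = 1) :
    SRCLHS (fun x a => hρ.posSemidef.sqrt * B x a * hρ.posSemidef.sqrt) = IRJM B ∧
    sSup {s : ℝ | ∃ (σ : Matrix (Fin d) (Fin d) ℂ) (hσ : σ.PosSemidef),
        σ.trace = 1 ∧ s = SRCLHS (fun x a => hσ.sqrt * B x a * hσ.sqrt)} = IRJM B := by
  have hd : d ≠ 0 := by
    rintro rfl
    simp [Matrix.trace] at hρ1
  set S : Matrix (Fin d) (Fin d) ℂ := hρ.posSemidef.sqrt with hSdef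
  have hSpsd : S.PosSemidef := hρ.posSemidef.posSemidef_sqrt
  have hSS : S * S = ρ := hρ.posSemidef.sqrt_mul_self
  have hss1 : (S * S).trace = 1 := by rw [hSS]; exact hρ1
  have hdet : S.det ≠ 0 := by
    intro h
    have h2 : S.det * S.det = ρ.det := by rw [← Matrix.det_mul, hSS]
    rw [h, mul_zero] at h2
    exact hρ.det_pos.ne' h2.symm
  set T : Matrix (Fin d) (Fin d) ℂ := S⁻¹ with hTdef
  have hTS : T * S = 1 := Matrix.nonsing_inv_mul S (isUnit_iff_ne_zero.mpr hdet)
  have hST : S * T = 1 := Matrix.mul_nonsing_inv S (isUnit_iff_ne_zero.mpr hdet)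
  have hTH : Tᴴ = T := by
    rw [hTdef, Matrix.conjTranspose_nonsing_inv, hSpsd.1.eq]
  have hTρT : T * ρ * T = 1 := by
    rw [← hSS, ← Matrix.mul_assoc, Matrix.mul_assoc T S S, ← Matrix.mul_assoc T S S,
      hTS, Matrix.one_mul, hST]
  have hTσT : ∀ x a, T * (S * B x a * S) * T = B x a := by
    intro x a
    simp only [Matrix.mul_assoc]
    rw [hST, Matrix.mul_one, ← Matrix.mul_assoc, hTS, Matrix.one_mul]
  have hpart1 : SRCLHS (fun x a => S * B x a * S) = IRJM B := by
    rw [SRCLHS, IRJM]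
    congr 1
    ext t
    simp only [Set.mem_setOf_eq]
    constructor
    · rintro ⟨ht, ξ, hξSA, hξLHS, hcons, hmixLHS⟩
      have hξred : ∀ x, ∑ a, ξ x a = ρ := by
        intro x
        rw [hcons x, ← mul_sum_mul, hB.2 x, Matrix.mul_one, hSS]
      have hJMN : JM (fun x a => T * ξ x a * T) ∧
          JM (fun x a => ((((1 + t : ℝ)) : ℂ))⁻¹ •
            (B x a + (t : ℂ) • (T * ξ x a * T))) := by
        rcases isEmpty_or_nonempty (Fin nx) with hemp | hne
        · exact ⟨jm_of_isEmpty hemp _, jm_of_isEmpty hemp _⟩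
        · obtain ⟨x₀⟩ := hne
          have h1 : T * (∑ a, ξ x₀ a) * T = 1 := by rw [hξred x₀, hTρT]
          have h1t : (((1 + t : ℝ)) : ℂ) ≠ 0 := by
            rw [Complex.ofReal_ne_zero]
            linarith
          have hmixred : ∑ a, ((((1 + t : ℝ) : ℂ))⁻¹ •
              (S * B x₀ a * S + (t : ℂ) • ξ x₀ a)) = ρ := by
            rw [← Finset.smul_sum, Finset.sum_add_distrib, ← mul_sum_mul, hB.2 x₀,
              Matrix.mul_one, hSS, ← Finset.smul_sum, hξred x₀]
            have hcomb : ρ + (t : ℂ) • ρ = (((1 + t : ℝ)) : ℂ) • ρ := by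
              push_cast
              rw [add_smul, one_smul]
            rw [hcomb, smul_smul, inv_mul_cancel₀ h1t, one_smul]
          have h2 : T * (∑ a, ((((1 + t : ℝ) : ℂ))⁻¹ •
              (S * B x₀ a * S + (t : ℂ) • ξ x₀ a))) * T = 1 := by
            rw [hmixred, hTρT]
          have hfe2 : (fun x a => ((((1 + t : ℝ)) : ℂ))⁻¹ •
                (B x a + (t : ℂ) • (T * ξ x a * T)))
              = (fun x a => T * (((((1 + t : ℝ)) : ℂ))⁻¹ •
                (S * B x a * S + (t : ℂ) • ξ x a)) * T) := by
            funext x a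
            rw [mul_smul_comm, smul_mul_assoc, mul_add, add_mul, hTσT x a,
              mul_smul_comm, smul_mul_assoc]
          refine ⟨jm_of_lhs_conj hTH hξLHS x₀ h1, ?_⟩
          rw [hfe2]
          exact jm_of_lhs_conj hTH hmixLHS x₀ h2
      exact ⟨ht, fun x a => T * ξ x a * T,
        ⟨fun x a => conj_psd hTH (hξSA.1 x a),
          fun x => by rw [← mul_sum_mul, hξred x, hTρT]⟩, hJMN.1, hJMN.2⟩
    · intro hmem
      exact forward_subset hSpsd hss1 B hB hmem
  refine ⟨hpart1, ?_⟩
  have hub : ∀ s ∈ {s : ℝ | ∃ (σ : Matrix (Fin d) (Fin d) ℂ) (hσ : σ.PosSemidef),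
      σ.trace = 1 ∧ s = SRCLHS (fun x a => hσ.sqrt * B x a * hσ.sqrt)}, s ≤ IRJM B := by
    rintro s ⟨σ, hσ, hσ1, rfl⟩
    have hW : (hσ.sqrt).PosSemidef := hσ.posSemidef_sqrt
    have hW1 : (hσ.sqrt * hσ.sqrt).trace = 1 := by rw [hσ.sqrt_mul_self]; exact hσ1
    rw [SRCLHS, IRJM]
    exact csInf_le_csInf ⟨0, fun u hu => hu.1⟩ (irjm_set_nonempty B hB hd)
      (forward_subset hW hW1 B hB)
  have hmem : IRJM B ∈ {s : ℝ | ∃ (σ : Matrix (Fin d) (Fin d) ℂ) (hσ : σ.PosSemidef),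
      σ.trace = 1 ∧ s = SRCLHS (fun x a => hσ.sqrt * B x a * hσ.sqrt)} :=
    ⟨ρ, hρ.posSemidef, hρ1, hpart1.symm⟩
  exact le_antisymm (csSup_le ⟨_, hmem⟩ hub) (le_csSup ⟨IRJM B, hub⟩ hmem)
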